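/- Let K be a symmetric PSD n×n matrix with top eigenvalue λ₁ and top unit eigenvector v₁ with nonnegative entries, let δ = ε/8 ≤ 0.01, let z_0 = (1/√n)·𝟙 so ⟨v₁, z_0⟩ ≥ 1/√n, and let z_t follow δ-approximate power iteration (z̃_{t+1} = Kz_t + ‖Kz_t‖δu_t with ⟨v₁,u_t⟩ ≥ 0, z_{t+1} = z̃_{t+1}/‖z̃_{t+1}‖). If T = 10 log(n)/ε, then there exists t ∈ [0,T] with z_tᵀ K z_t ≥ (1 − ε/2)·λ₁. -/

import Mathlib

open Matrix

/-- Euclidean norm of a vector in `ℝⁿ`. -/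
noncomputable def vecEnorm {n : ℕ} (x : Fin n → ℝ) : ℝ := Real.sqrt (∑ i, x i ^ 2)

namespace Stmt6Aux
variable {n : ℕ}

lemma dot_self_nonneg (x : Fin n → ℝ) : 0 ≤ x ⬝ᵥ x :=
  Finset.sum_nonneg fun _ _ => mul_self_nonneg _

lemma enorm_eq (x : Fin n → ℝ) : vecEnorm x = Real.sqrt (x ⬝ᵥ x) := by
  simp [vecEnorm, dotProduct, sq]

lemma enorm_nonneg (x : Fin n → ℝ) : 0 ≤ vecEnorm x := Real.sqrt_nonneg _

lemma enorm_sq (x : Fin n → ℝ) : vecEnorm x ^ 2 = x ⬝ᵥ x := by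
  rw [enorm_eq, Real.sq_sqrt (dot_self_nonneg x)]

lemma dot_le_enorm_mul (x y : Fin n → ℝ) : x ⬝ᵥ y ≤ vecEnorm x * vecEnorm y := by
  have h := Finset.sum_mul_sq_le_sq_mul_sq Finset.univ x y
  calc x ⬝ᵥ y ≤ |x ⬝ᵥ y| := le_abs_self _
    _ = Real.sqrt ((x ⬝ᵥ y) ^ 2) := (Real.sqrt_sq_eq_abs _).symm
    _ ≤ Real.sqrt ((∑ i, x i ^ 2) * (∑ i, y i ^ 2)) := Real.sqrt_le_sqrt h
    _ = vecEnorm x * vecEnorm y := by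
        rw [Real.sqrt_mul (Finset.sum_nonneg fun i _ => sq_nonneg _)]; rfl

lemma enorm_smul (c : ℝ) (x : Fin n → ℝ) : vecEnorm (c • x) = |c| * vecEnorm x := by
  simp only [vecEnorm, Pi.smul_apply, smul_eq_mul, mul_pow, ← Finset.mul_sum,
    Real.sqrt_mul (sq_nonneg c), Real.sqrt_sq_eq_abs]

lemma enorm_add_le (x y : Fin n → ℝ) : vecEnorm (x + y) ≤ vecEnorm x + vecEnorm y := by
  have hd : (x + y) ⬝ᵥ (x + y) = x ⬝ᵥ x + 2 * (x ⬝ᵥ y) + y ⬝ᵥ y := by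
    simp [add_dotProduct, dotProduct_add, dotProduct_comm y x]; ring
  have h2 : (x + y) ⬝ᵥ (x + y) ≤ (vecEnorm x + vecEnorm y) ^ 2 := by
    rw [hd]
    have := dot_le_enorm_mul x y
    have hx := enorm_sq x
    have hy := enorm_sq y
    nlinarith
  calc vecEnorm (x + y) = Real.sqrt ((x+y) ⬝ᵥ (x+y)) := enorm_eq _
    _ ≤ Real.sqrt ((vecEnorm x + vecEnorm y) ^ 2) := Real.sqrt_le_sqrt h2
    _ = |vecEnorm x + vecEnorm y| := Real.sqrt_sq_eq_abs _
    _ = vecEnorm x + vecEnorm y := abs_of_nonneg (add_nonneg (enorm_nonneg x) (enorm_nonneg y))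

lemma dot_mulVec_symm (A : Matrix (Fin n) (Fin n) ℝ) (hA : Aᵀ = A) (x y : Fin n → ℝ) :
    (A.mulVec x) ⬝ᵥ y = x ⬝ᵥ A.mulVec y := by
  have hx : A.mulVec x = vecMul x A := by rw [← Matrix.mulVec_transpose, hA]
  rw [hx, ← Matrix.dotProduct_mulVec]

lemma rayleigh_aux (K : Matrix (Fin n) (Fin n) ℝ) (hK : K.PosSemidef) (lam1 : ℝ)
    (htop : ∀ i, hK.1.eigenvalues i ≤ lam1) (x : Fin n → ℝ) :
    x ⬝ᵥ K.mulVec x ≤ lam1 * (x ⬝ᵥ x) := by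
  set U : Matrix (Fin n) (Fin n) ℝ := (hK.1.eigenvectorUnitary : Matrix (Fin n) (Fin n) ℝ) with hU
  have hUU : U * star U = 1 := (Matrix.mem_unitaryGroup_iff).mp hK.1.eigenvectorUnitary.2
  have hspec : K = U * Matrix.diagonal (RCLike.ofReal ∘ hK.1.eigenvalues) * star U :=
    hK.1.spectral_theorem
  set y : Fin n → ℝ := (star U).mulVec x with hy
  have hxU : vecMul x U = y := by
    rw [hy, ← Matrix.mulVec_transpose]
    congr 1
  have h1' : x ⬝ᵥ (U * Matrix.diagonal (RCLike.ofReal ∘ hK.1.eigenvalues) * star U).mulVec x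
      = ∑ i, hK.1.eigenvalues i * y i ^ 2 := by
    rw [← Matrix.mulVec_mulVec, ← Matrix.mulVec_mulVec, Matrix.dotProduct_mulVec, hxU]
    simp only [dotProduct, Matrix.mulVec_diagonal, Function.comp_apply,
      RCLike.ofReal_real_eq_id, id_eq]
    exact Finset.sum_congr rfl fun i _ => by ring
  rw [← hspec] at h1'
  have h2' : x ⬝ᵥ ((U * star U).mulVec x) = y ⬝ᵥ y := by
    rw [← Matrix.mulVec_mulVec, Matrix.dotProduct_mulVec, hxU, ← hy]
  rw [hUU, Matrix.one_mulVec] at h2'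
  have h2 : x ⬝ᵥ x = ∑ i, y i ^ 2 := by
    rw [h2']; exact Finset.sum_congr rfl fun i _ => (sq (y i)).symm
  rw [h1', h2, Finset.mul_sum]
  exact Finset.sum_le_sum fun i _ => mul_le_mul_of_nonneg_right (htop i) (sq_nonneg _)

open scoped MatrixOrder in
lemma normKz_sq_le (K : Matrix (Fin n) (Fin n) ℝ) (hK : K.PosSemidef) (lam1 : ℝ)
    (htop : ∀ i, hK.1.eigenvalues i ≤ lam1) (zz : Fin n → ℝ) :
    (K.mulVec zz) ⬝ᵥ (K.mulVec zz) ≤ lam1 * (zz ⬝ᵥ K.mulVec zz) := by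
  have hsymK : Kᵀ = K := by
    exact (by simpa [Matrix.conjTranspose] using hK.1 : K.IsSymm)
  set S := CFC.sqrt K with hS
  have hSps : S.PosSemidef := Matrix.nonneg_iff_posSemidef.mp (CFC.sqrt_nonneg K)
  have hsymS : Sᵀ = S := by
    exact (by simpa [Matrix.conjTranspose] using hSps.1 : S.IsSymm)
  have hSS : S * S = K := CFC.sqrt_mul_sqrt_self K (Matrix.nonneg_iff_posSemidef.mpr hK)
  set s := S.mulVec zz with hs
  have e1 : s ⬝ᵥ s = zz ⬝ᵥ K.mulVec zz := by
    rw [hs, dot_mulVec_symm S hsymS, Matrix.mulVec_mulVec, hSS]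
  have hmat : S * K * S = K * K := by
    rw [← hSS]; noncomm_ring
  have e2 : s ⬝ᵥ K.mulVec s = (K.mulVec zz) ⬝ᵥ (K.mulVec zz) := by
    rw [hs, dot_mulVec_symm S hsymS, Matrix.mulVec_mulVec, Matrix.mulVec_mulVec, hmat,
      dot_mulVec_symm K hsymK, Matrix.mulVec_mulVec]
  have := rayleigh_aux K hK lam1 htop s
  rw [e1, e2] at this
  exact this

end Stmt6Aux

set_option maxHeartbeats 1000000 in
open Stmt6Aux in
theorem stmt6 {n : ℕ} (hn : 2 ≤ n) (K : Matrix (Fin n) (Fin n) ℝ) (hK : K.PosSemidef)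
    (hKnn : ∀ i j, 0 ≤ K i j)
    (lam1 : ℝ) (v1 : Fin n → ℝ)
    (heig : K.mulVec v1 = lam1 • v1) (hv1 : vecEnorm v1 = 1) (hv1nn : ∀ i, 0 ≤ v1 i)
    (htop : ∀ i, hK.1.eigenvalues i ≤ lam1)
    (ε : ℝ) (hε : 0 < ε) (hε1 : ε ≤ 0.08)
    (δ : ℝ) (hδ : δ = ε / 8)
    (z u : ℕ → Fin n → ℝ)
    (hz0 : z 0 = fun _ => 1 / Real.sqrt n)
    (hunorm : ∀ t, vecEnorm (u t) = 1) (hupos : ∀ t, 0 ≤ v1 ⬝ᵥ u t)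
    (hrec : ∀ t, z (t + 1) =
      (vecEnorm (K.mulVec (z t) + (vecEnorm (K.mulVec (z t)) * δ) • u t))⁻¹ •
        (K.mulVec (z t) + (vecEnorm (K.mulVec (z t)) * δ) • u t))
    (T : ℕ) (hT : 10 * Real.log n / ε ≤ T) :
    ∃ t ≤ T, (1 - ε / 2) * lam1 ≤ z t ⬝ᵥ K.mulVec (z t) := by
  have hsymK : Kᵀ = K := by
    exact (by simpa [Matrix.conjTranspose] using hK.1 : K.IsSymm)
  have hn1 : (1:ℝ) < n := by exact_mod_cast lt_of_lt_of_le one_lt_two hn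
  have hn0 : (0:ℝ) < n := by linarith
  have hsn : 0 < Real.sqrt n := Real.sqrt_pos.2 hn0
  have hlam_nonneg : 0 ≤ lam1 :=
    le_trans (hK.eigenvalues_nonneg ⟨0, by omega⟩) (htop ⟨0, by omega⟩)
  rcases eq_or_lt_of_le hlam_nonneg with hlam0 | hlam_pos
  · refine ⟨0, Nat.zero_le _, ?_⟩
    rw [← hlam0, mul_zero]
    simpa using hK.dotProduct_mulVec_nonneg (z 0)
  by_contra hcon
  push_neg at hcon
  have hε2 : (0:ℝ) < 1 - ε/2 := by norm_num at hε1 ⊢; linarith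
  have hδpos : 0 < δ := by rw [hδ]; linarith
  set c : ℝ := (1 + δ) * Real.sqrt (1 - ε/2) with hc
  have hcpos : 0 < c := mul_pos (by linarith) (Real.sqrt_pos.2 hε2)
  have hcle : c ≤ Real.exp (-(ε/8)) := by
    have h1 : 1 + δ ≤ Real.exp δ := by have := Real.add_one_le_exp δ; linarith
    have h2 : Real.sqrt (1 - ε/2) ≤ Real.exp (-(ε/4)) := by
      have h3 : 1 - ε/2 ≤ Real.exp (-(ε/2)) := by
        have := Real.add_one_le_exp (-(ε/2)); linarith
      have h4 := Real.sqrt_le_sqrt h3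
      rwa [← Real.exp_half, (by ring : -(ε/2)/2 = -(ε/4))] at h4
    calc c ≤ Real.exp δ * Real.exp (-(ε/4)) :=
          mul_le_mul h1 h2 (Real.sqrt_nonneg _) (Real.exp_pos _).le
      _ = Real.exp (-(ε/8)) := by rw [← Real.exp_add]; congr 1; rw [hδ]; ring
  have hcinv : Real.exp (ε/8) ≤ c⁻¹ := by
    have h := inv_anti₀ hcpos hcle
    rwa [← Real.exp_neg, neg_neg] at h
  have key : ∀ t, t ≤ T →
      vecEnorm (z t) = 1 ∧ (Real.sqrt n)⁻¹ * Real.exp (ε/8 * t) ≤ v1 ⬝ᵥ z t := by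
    intro t
    induction t with
    | zero =>
      intro _
      have hsum : (∑ _i : Fin n, (1 / Real.sqrt n) ^ 2) = 1 := by
        rw [Finset.sum_const, Finset.card_univ, Fintype.card_fin, nsmul_eq_mul,
          div_pow, one_pow, Real.sq_sqrt hn0.le]
        field_simp
      constructor
      · rw [hz0]
        show Real.sqrt (∑ i : Fin n, (1 / Real.sqrt n) ^ 2) = 1
        rw [hsum, Real.sqrt_one]
      · have hv1sq : (∑ i, v1 i ^ 2) = 1 := by
          have h := hv1
          rw [vecEnorm] at h
          have h2 : Real.sqrt (∑ i, v1 i ^ 2) ^ 2 = ∑ i, v1 i ^ 2 :=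
            Real.sq_sqrt (Finset.sum_nonneg fun i _ => sq_nonneg (v1 i))
          rw [h, one_pow] at h2
          exact h2.symm
        have hsum1 : 1 ≤ ∑ i, v1 i := by
          have h := Finset.sum_sq_le_sq_sum_of_nonneg (s := Finset.univ)
            (f := v1) (fun i _ => hv1nn i)
          have hnn : 0 ≤ ∑ i, v1 i := Finset.sum_nonneg fun i _ => hv1nn i
          nlinarith
        have hdot : v1 ⬝ᵥ z 0 = (∑ i, v1 i) * (1 / Real.sqrt n) := by
          rw [hz0, dotProduct, ← Finset.sum_mul]
        rw [hdot]
        calc (Real.sqrt n)⁻¹ * Real.exp (ε/8 * (0:ℕ)) = 1 * (1 / Real.sqrt n) := by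
              norm_num
          _ ≤ (∑ i, v1 i) * (1 / Real.sqrt n) :=
              mul_le_mul_of_nonneg_right hsum1 (by positivity)
    | succ t ih =>
      intro hle
      have ht : t ≤ T := le_trans (Nat.le_succ t) hle
      obtain ⟨hz1, ha⟩ := ih ht
      have hapos : 0 < v1 ⬝ᵥ z t := lt_of_lt_of_le (by positivity) ha
      set w : Fin n → ℝ := K.mulVec (z t) with hw
      set m : ℝ := vecEnorm w with hm
      set vv : Fin n → ℝ := w + (m * δ) • u t with hvv
      set N : ℝ := vecEnorm vv with hN
      have hzrec : z (t+1) = N⁻¹ • vv := hrec t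
      have hmnn : 0 ≤ m := hm ▸ enorm_nonneg w
      have hv1w : v1 ⬝ᵥ w = lam1 * (v1 ⬝ᵥ z t) := by
        rw [hw, ← dot_mulVec_symm K hsymK, heig, smul_dotProduct, smul_eq_mul]
      have hv1v : lam1 * (v1 ⬝ᵥ z t) ≤ v1 ⬝ᵥ vv := by
        rw [hvv, dotProduct_add, dotProduct_smul, hv1w, smul_eq_mul]
        have h0 : 0 ≤ m * δ * (v1 ⬝ᵥ u t) :=
          mul_nonneg (mul_nonneg hmnn hδpos.le) (hupos t)
        linarith
      have hlampos_a : 0 < lam1 * (v1 ⬝ᵥ z t) := mul_pos hlam_pos hapos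
      have hvN : v1 ⬝ᵥ vv ≤ N := by
        have h := dot_le_enorm_mul v1 vv
        rwa [hv1, one_mul, ← hN] at h
      have hNpos : 0 < N := lt_of_lt_of_le hlampos_a (le_trans hv1v hvN)
      have hznorm : vecEnorm (z (t+1)) = 1 := by
        rw [hzrec, enorm_smul, abs_of_nonneg (inv_nonneg.2 hNpos.le), ← hN,
          inv_mul_cancel₀ hNpos.ne']
      refine ⟨hznorm, ?_⟩
      have hray := normKz_sq_le K hK lam1 htop (z t)
      have hgap := hcon t ht
      have hmle : m ≤ lam1 * Real.sqrt (1 - ε/2) := by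
        have h0 : m^2 = w ⬝ᵥ w := hm ▸ enorm_sq w
        have h1 : m^2 ≤ (lam1 * Real.sqrt (1 - ε/2))^2 := by
          rw [mul_pow, Real.sq_sqrt hε2.le, h0, hw]
          nlinarith
        have h2 := Real.sqrt_le_sqrt h1
        rwa [Real.sqrt_sq hmnn, Real.sqrt_sq (by positivity)] at h2
      have hNle : N ≤ lam1 * c := by
        rw [hN, hvv]
        calc vecEnorm (w + (m*δ) • u t) ≤ vecEnorm w + vecEnorm ((m*δ) • u t) := enorm_add_le _ _
          _ = m + m * δ := by
              rw [enorm_smul, hunorm t, mul_one,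
                abs_of_nonneg (mul_nonneg hmnn hδpos.le), ← hm]
          _ = m * (1 + δ) := by ring
          _ ≤ (lam1 * Real.sqrt (1 - ε/2)) * (1 + δ) :=
              mul_le_mul_of_nonneg_right hmle (by linarith)
          _ = lam1 * c := by rw [hc]; ring
      have hstep : (v1 ⬝ᵥ z t) * Real.exp (ε/8) ≤ v1 ⬝ᵥ z (t+1) := by
        rw [hzrec, dotProduct_smul, smul_eq_mul]
        have h1 : (lam1 * c)⁻¹ * (lam1 * (v1 ⬝ᵥ z t)) ≤ N⁻¹ * (v1 ⬝ᵥ vv) :=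
          mul_le_mul (inv_anti₀ hNpos hNle) hv1v hlampos_a.le (inv_nonneg.2 hNpos.le)
        have h2 : (lam1 * c)⁻¹ * (lam1 * (v1 ⬝ᵥ z t)) = (v1 ⬝ᵥ z t) * c⁻¹ := by
          field_simp
        have h3 : (v1 ⬝ᵥ z t) * Real.exp (ε/8) ≤ (v1 ⬝ᵥ z t) * c⁻¹ :=
          mul_le_mul_of_nonneg_left hcinv hapos.le
        linarith
      calc (Real.sqrt n)⁻¹ * Real.exp (ε/8 * ((t+1:ℕ):ℝ))
          = ((Real.sqrt n)⁻¹ * Real.exp (ε/8 * t)) * Real.exp (ε/8) := by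
            rw [mul_assoc, ← Real.exp_add]
            congr 2
            push_cast
            ring
        _ ≤ (v1 ⬝ᵥ z t) * Real.exp (ε/8) :=
            mul_le_mul_of_nonneg_right ha (Real.exp_pos _).le
        _ ≤ v1 ⬝ᵥ z (t+1) := hstep
  obtain ⟨hzT, haT⟩ := key T le_rfl
  have hub : v1 ⬝ᵥ z T ≤ 1 := by
    have h := dot_le_enorm_mul v1 (z T)
    rwa [hv1, hzT, one_mul] at h
  have hlogn : 0 < Real.log n := Real.log_pos hn1
  have hTlb : Real.log n / 2 < ε/8 * T := by
    have h1 : 10 * Real.log n ≤ (T:ℝ) * ε := (div_le_iff₀ hε).mp hT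
    nlinarith
  have hgt : 1 < (Real.sqrt n)⁻¹ * Real.exp (ε/8 * T) := by
    have h1 : Real.sqrt n < Real.exp (ε/8 * T) := by
      have h0 : Real.sqrt n = Real.exp (Real.log n / 2) := by
        rw [← Real.log_sqrt hn0.le, Real.exp_log hsn]
      rw [h0]
      exact Real.exp_lt_exp.2 hTlb
    calc (1:ℝ) = (Real.sqrt n)⁻¹ * Real.sqrt n := (inv_mul_cancel₀ hsn.ne').symm
      _ < (Real.sqrt n)⁻¹ * Real.exp (ε/8 * T) :=
          mul_lt_mul_of_pos_left h1 (inv_pos.2 hsn)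
  linarith
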